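/- Let Y, Q be random vectors in ℝ^d and Π a random d×d matrix such that (i) Q is independent of the pair (Y, Π); (ii) for some α > 0 and regularly varying a of index 1/α, Y and Q are regularly varying with index α and normalizing function a; (iii) E‖Π‖^β < ∞ for some β > α. Then for every t > 0 and ε > 0: lim_{n→∞} n P( ‖Y‖ > (1+ε) t a_n and ‖Y + ΠQ‖ ≤ t a_n ) = 0. -/

import Mathlib

open MeasureTheory ProbabilityTheory Filter Topology ENNReal

noncomputable section

/-- `ℝ^d` with the sup norm (the Pi norm on `Fin d → ℝ` is the sup norm). -/
abbrev Vec (d : ℕ) := Fin d → ℝ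

/-- `d × d` real matrices. -/
abbrev Mat (d : ℕ) := Matrix (Fin d) (Fin d) ℝ

/-- The operator norm of a `d × d` matrix, induced by the sup norm on `ℝ^d`. -/
noncomputable def opNorm {d : ℕ} (M : Mat d) : ℝ :=
  ‖LinearMap.toContinuousLinearMap M.mulVecLin‖

/-- `a` is regularly varying of index `ρ`: `a t = t ^ ρ * L t` with `L` slowly varying. -/
def RegVaryFun (a : ℝ → ℝ) (ρ : ℝ) : Prop :=
  ∃ L : ℝ → ℝ, Measurable L ∧ (∀ t > 0, 0 < L t) ∧
    (∀ lam > 0, Filter.Tendsto (fun t => L (lam * t) / L t) Filter.atTop (nhds 1)) ∧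
    (∀ t > 0, a t = t ^ ρ * L t)

/-- A random vector `X` is regularly varying with index `α > 0`, normalizing function `a`
and associated measure of regular variation `ν`: `ν` is finite on Borel sets bounded away
from `0` and `n P(a_n⁻¹ X ∈ A) → ν A` for every Borel `ν`-continuity set `A` bounded away
from `0`. -/
def IsRegVar {Ω : Type*} [MeasurableSpace Ω] (P : Measure Ω) {d : ℕ}
    (X : Ω → Vec d) (α : ℝ) (a : ℝ → ℝ) (ν : Measure (Vec d)) : Prop :=
  0 < α ∧ RegVaryFun a (1 / α) ∧
  (∀ A : Set (Vec d), MeasurableSet A → 0 ∉ closure A → ν A < ⊤) ∧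
  ∀ A : Set (Vec d), MeasurableSet A → 0 ∉ closure A → ν (frontier A) = 0 →
    Filter.Tendsto (fun n : ℕ => (n : ℝ) * (P {ω | (a n)⁻¹ • X ω ∈ A}).toReal)
      Filter.atTop (nhds (ν A).toReal)

instance {d : ℕ} : MeasurableSpace (Mat d) :=
  (inferInstance : MeasurableSpace (Fin d → Fin d → ℝ))

/-! ### Auxiliary material -/

section Aux

/-- The matrix-to-continuous-linear-map assignment, as a linear map. -/
noncomputable def toCLM {d : ℕ} : Mat d →ₗ[ℝ] ((Vec d) →L[ℝ] (Vec d)) where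
  toFun M := LinearMap.toContinuousLinearMap M.mulVecLin
  map_add' M N := by simp [map_add]
  map_smul' c M := by
    simp only [RingHom.id_apply]
    rw [show (c • M).mulVecLin = c • M.mulVecLin from
      LinearMap.ext fun v => by simp [Matrix.mulVecLin_apply, Matrix.smul_mulVec],
      _root_.map_smul]

lemma continuous_opNorm {d : ℕ} : Continuous (fun M : Mat d => opNorm M) := by
  have h : Continuous (⇑(toCLM (d := d))) := LinearMap.continuous_of_finiteDimensional _
  exact continuous_norm.comp h

lemma measurable_opNorm {d : ℕ} : Measurable (fun M : Mat d => opNorm M) := by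
  have : BorelSpace (Mat d) := inferInstanceAs (BorelSpace (Fin d → Fin d → ℝ))
  exact continuous_opNorm.measurable

lemma opNorm_mulVec_le {d : ℕ} (M : Mat d) (q : Vec d) : ‖M.mulVec q‖ ≤ opNorm M * ‖q‖ := by
  have := (LinearMap.toContinuousLinearMap (M.mulVecLin)).le_opNorm q
  simpa [opNorm] using this

lemma opNorm_nonneg' {d : ℕ} (M : Mat d) : 0 ≤ opNorm M := norm_nonneg _

end Aux

section SlowVar
variable {L : ℝ → ℝ}

private noncomputable def slowh (L : ℝ → ℝ) : ℝ → ℝ := fun x => Real.log (L (Real.exp x))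

lemma slowh_meas (hLm : Measurable L) : Measurable (slowh L) :=
  Real.measurable_log.comp (hLm.comp Real.continuous_exp.measurable)

lemma slowh_tendsto (hLpos : ∀ t > 0, 0 < L t)
    (hsv : ∀ lam > 0, Tendsto (fun t => L (lam * t) / L t) atTop (𝓝 1)) (v : ℝ) :
    Tendsto (fun x => slowh L (x + v) - slowh L x) atTop (𝓝 0) := by
  have h1 := (hsv (Real.exp v) (Real.exp_pos v)).comp Real.tendsto_exp_atTop
  have h2 : Tendsto (fun x => Real.log (L (Real.exp v * Real.exp x) / L (Real.exp x)))
      atTop (𝓝 0) := by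
    have hc : ContinuousAt Real.log 1 := Real.continuousAt_log one_ne_zero
    have := hc.tendsto.comp h1
    simpa [Function.comp_def] using this
  refine h2.congr fun x => ?_
  have hx : (0:ℝ) < Real.exp x := Real.exp_pos x
  have hvx : (0:ℝ) < Real.exp v * Real.exp x := by positivity
  rw [Real.log_div (ne_of_gt (hLpos _ hvx)) (ne_of_gt (hLpos _ hx))]
  simp [slowh, ← Real.exp_add, add_comm v x]

/-- Uniform convergence theorem for slowly varying functions. -/
lemma slowh_uct (hLm : Measurable L) (hLpos : ∀ t > 0, 0 < L t)
    (hsv : ∀ lam > 0, Tendsto (fun t => L (lam * t) / L t) atTop (𝓝 1))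
    {ε : ℝ} (hε : 0 < ε) :
    ∃ X₀ : ℝ, ∀ x ≥ X₀, ∀ v, 0 ≤ v → v ≤ 1 → |slowh L (x + v) - slowh L x| ≤ ε := by
  set h := slowh L with hh
  by_contra hcon
  push_neg at hcon
  choose xs hxs vs hv0 hv1 hvgt using fun m : ℕ => hcon (m : ℝ)
  set A : ℕ → Set ℝ := fun m =>
    Set.Icc 0 2 ∩ {v | ∃ k, m ≤ k ∧ ε/2 ≤ |h (xs k + v) - h (xs k)|} with hA
  set B : ℕ → Set ℝ := fun m =>
    Set.Icc 0 2 ∩ {v | ∃ k, m ≤ k ∧ ε/2 ≤ |h ((xs k + vs k) + v) - h (xs k + vs k)|} with hB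
  have hmeas : ∀ (c : ℕ → ℝ) (m : ℕ), MeasurableSet (Set.Icc (0:ℝ) 2 ∩
      {v | ∃ k, m ≤ k ∧ ε/2 ≤ |h (c k + v) - h (c k)|}) := by
    intro c m
    refine measurableSet_Icc.inter ?_
    have : {v : ℝ | ∃ k, m ≤ k ∧ ε/2 ≤ |h (c k + v) - h (c k)|} =
        ⋃ k, ⋃ (_ : m ≤ k), {v | ε/2 ≤ |h (c k + v) - h (c k)|} := by
      ext v; simp
    rw [this]
    refine MeasurableSet.iUnion fun k => MeasurableSet.iUnion fun _ => ?_
    have hmh : Measurable fun v : ℝ => |h (c k + v) - h (c k)| :=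
      (((slowh_meas hLm).comp (measurable_const.add measurable_id)).sub measurable_const).abs
    exact measurableSet_le measurable_const hmh
  have hAmeas : ∀ m, MeasurableSet (A m) := fun m => hmeas xs m
  have hBmeas : ∀ m, MeasurableSet (B m) := fun m => hmeas (fun k => xs k + vs k) m
  have hanti : ∀ (c : ℕ → ℝ), Antitone (fun m => Set.Icc (0:ℝ) 2 ∩
      {v | ∃ k, m ≤ k ∧ ε/2 ≤ |h (c k + v) - h (c k)|}) := by
    intro c m m' hmm'
    refine Set.inter_subset_inter le_rfl ?_
    rintro v ⟨k, hk, hk2⟩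
    exact ⟨k, le_trans hmm' hk, hk2⟩
  have hempty : ∀ (c : ℕ → ℝ), (∀ k : ℕ, (k:ℝ) ≤ c k) →
      (⋂ m, Set.Icc (0:ℝ) 2 ∩ {v | ∃ k, m ≤ k ∧ ε/2 ≤ |h (c k + v) - h (c k)|}) = ∅ := by
    intro c hc
    ext v
    simp only [Set.mem_iInter, Set.mem_empty_iff_false, iff_false]
    intro hv
    have hvt : Tendsto (fun x => h (x + v) - h x) atTop (𝓝 0) := slowh_tendsto hLpos hsv v
    have hev : ∀ᶠ x in atTop, |h (x + v) - h x| < ε/2 := by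
      have := NormedAddCommGroup.tendsto_nhds_zero.mp hvt (ε/2) (by positivity)
      simpa [Real.norm_eq_abs] using this
    obtain ⟨X, hX⟩ := eventually_atTop.mp hev
    obtain ⟨-, k, hk1, hk2⟩ := hv ⌈X⌉₊
    have : |h (c k + v) - h (c k)| < ε/2 := by
      refine hX _ ?_
      calc X ≤ (⌈X⌉₊ : ℝ) := Nat.le_ceil X
        _ ≤ (k : ℝ) := by exact_mod_cast hk1
        _ ≤ c k := hc k
    linarith
  have hfinA : volume (A 0) ≠ ⊤ :=
    ne_of_lt (lt_of_le_of_lt (measure_mono Set.inter_subset_left)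
      (by rw [Real.volume_Icc]; exact ENNReal.ofReal_lt_top))
  have hfinB : volume (B 0) ≠ ⊤ :=
    ne_of_lt (lt_of_le_of_lt (measure_mono Set.inter_subset_left)
      (by rw [Real.volume_Icc]; exact ENNReal.ofReal_lt_top))
  have htendA : Tendsto (volume ∘ A) atTop (𝓝 0) := by
    have := tendsto_measure_iInter_atTop (μ := volume)
      (fun m => (hAmeas m).nullMeasurableSet) (hanti xs) ⟨0, hfinA⟩
    rwa [hempty xs hxs, measure_empty] at this
  have htendB : Tendsto (volume ∘ B) atTop (𝓝 0) := by
    have := tendsto_measure_iInter_atTop (μ := volume)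
      (fun m => (hBmeas m).nullMeasurableSet)
      (hanti (fun k => xs k + vs k)) ⟨0, hfinB⟩
    have he : (⋂ m, B m) = ∅ := hempty (fun k => xs k + vs k)
      (fun k => by have h1 := hxs k; have h2 := hv0 k; show (k:ℝ) ≤ xs k + vs k; linarith)
    rwa [he, measure_empty] at this
  have hq : (0:ℝ≥0∞) < ENNReal.ofReal (1/4) := by norm_num
  obtain ⟨m₁, hm₁⟩ := (htendA.eventually_lt_const hq).exists
  obtain ⟨m₂, hm₂⟩ := (htendB.eventually_lt_const hq).exists
  set m := max m₁ m₂ with hm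
  have hAm : volume (A m) < ENNReal.ofReal (1/4) :=
    lt_of_le_of_lt (measure_mono (hanti xs (le_max_left m₁ m₂))) hm₁
  have hBm : volume (B m) < ENNReal.ofReal (1/4) :=
    lt_of_le_of_lt (measure_mono (hanti _ (le_max_right m₁ m₂))) hm₂
  set Y2 : Set ℝ := (fun w => w + vs m) '' (B m) with hY2
  have hY2vol : volume Y2 = volume (B m) := by
    rw [hY2, Set.image_add_right, measure_preimage_add_right]
  have hcover : Set.Icc (1:ℝ) 2 ⊆ (Set.Icc (1:ℝ) 2 \ (A m ∪ Y2)) ∪ (A m ∪ Y2) :=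
    fun v hv => by by_cases hmem : v ∈ A m ∪ Y2
                   · exact Or.inr hmem
                   · exact Or.inl ⟨hv, hmem⟩
  have hvol1 : (ENNReal.ofReal 1) ≤ volume (Set.Icc (1:ℝ) 2 \ (A m ∪ Y2)) +
      volume (A m ∪ Y2) := by
    calc ENNReal.ofReal 1 = volume (Set.Icc (1:ℝ) 2) := by rw [Real.volume_Icc]; norm_num
    _ ≤ volume ((Set.Icc (1:ℝ) 2 \ (A m ∪ Y2)) ∪ (A m ∪ Y2)) := measure_mono hcover
    _ ≤ _ := measure_union_le _ _
  have hvolAY : volume (A m ∪ Y2) < ENNReal.ofReal (1/2) := by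
    calc volume (A m ∪ Y2) ≤ volume (A m) + volume Y2 := measure_union_le _ _
    _ = volume (A m) + volume (B m) := by rw [hY2vol]
    _ < ENNReal.ofReal (1/4) + ENNReal.ofReal (1/4) := ENNReal.add_lt_add hAm hBm
    _ = ENNReal.ofReal (1/2) := by rw [← ENNReal.ofReal_add] <;> norm_num
  have hXne : (Set.Icc (1:ℝ) 2 \ (A m ∪ Y2)).Nonempty := by
    refine nonempty_of_measure_ne_zero (μ := volume) ?_
    intro h0
    rw [h0, zero_add] at hvol1
    have := lt_of_le_of_lt hvol1 hvolAY
    rw [ENNReal.ofReal_lt_ofReal_iff (by norm_num)] at this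
    norm_num at this
  obtain ⟨v, hvIcc, hvnot⟩ := hXne
  have hv02 : v ∈ Set.Icc (0:ℝ) 2 := ⟨le_trans zero_le_one hvIcc.1, hvIcc.2⟩
  have hvA : ∀ k, m ≤ k → |h (xs k + v) - h (xs k)| < ε/2 := by
    intro k hk
    by_contra hcon2
    exact hvnot (Or.inl ⟨hv02, k, hk, le_of_not_gt hcon2⟩)
  set w := v - vs m with hw
  have hwB : w ∈ Set.Icc (0:ℝ) 2 := by
    constructor
    · have := hv1 m; have := hvIcc.1; simp only [hw]; linarith
    · have := hv0 m; have := hvIcc.2; simp only [hw]; linarith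
  have hwnot : w ∉ B m := by
    intro hmem
    exact hvnot (Or.inr ⟨w, hmem, show w + vs m = v by rw [hw]; ring⟩)
  have hwlt : |h ((xs m + vs m) + w) - h (xs m + vs m)| < ε/2 := by
    by_contra hcon2
    exact hwnot ⟨hwB, m, le_rfl, le_of_not_gt hcon2⟩
  have hkey : (xs m + vs m) + w = xs m + v := by rw [hw]; ring
  have h1 := hvA m le_rfl
  have h2 := hvgt m
  rw [hkey] at hwlt
  have htri : |h (xs m + vs m) - h (xs m)| ≤
      |h (xs m + vs m) - h (xs m + v)| + |h (xs m + v) - h (xs m)| := abs_sub_le _ _ _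
  rw [abs_sub_comm] at hwlt
  linarith

/-- Chained increment bound. -/
lemma slowh_chain (hLm : Measurable L) (hLpos : ∀ t > 0, 0 < L t)
    (hsv : ∀ lam > 0, Tendsto (fun t => L (lam * t) / L t) atTop (𝓝 1))
    {η : ℝ} (hη : 0 < η) :
    ∃ X₀ : ℝ, ∀ x ≥ X₀, ∀ w, 0 ≤ w → |slowh L (x + w) - slowh L x| ≤ η * (w + 1) := by
  obtain ⟨X₀, hX₀⟩ := slowh_uct hLm hLpos hsv hη
  refine ⟨X₀, fun x hx w hw => ?_⟩
  set h := slowh L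
  have main : ∀ N : ℕ, ∀ w : ℝ, 0 ≤ w → w ≤ (N:ℝ) → ∀ x ≥ X₀, |h (x + w) - h x| ≤ η * N := by
    intro N
    induction N with
    | zero => intro w hw0 hwN x hx
              have : w = 0 := le_antisymm (by exact_mod_cast hwN) hw0
              simp [this]
    | succ N ih =>
      intro w hw0 hwN x hx
      push_cast at hwN
      rw [show ((N+1:ℕ):ℝ) = (N:ℝ)+1 by push_cast; ring]
      by_cases hcase : w ≤ (N:ℝ)
      · calc |h (x + w) - h x| ≤ η * N := ih w hw0 hcase x hx
          _ ≤ η * ((N:ℝ) + 1) := by nlinarith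
      · push_neg at hcase
        by_cases hsmall : w ≤ 1
        · calc |h (x + w) - h x| ≤ η := hX₀ x hx w hw0 hsmall
            _ ≤ η * ((N:ℝ) + 1) := by nlinarith [Nat.cast_nonneg (α := ℝ) N]
        · push_neg at hsmall
          have hw1 : (0:ℝ) ≤ w - 1 := by linarith
          have hwN' : w - 1 ≤ (N : ℝ) := by linarith
          have step1 : |h ((x + (w-1)) + 1) - h (x + (w-1))| ≤ η := by
            refine hX₀ _ ?_ 1 zero_le_one le_rfl
            linarith
          have step2 : |h (x + (w-1)) - h x| ≤ η * N := ih (w-1) hw1 hwN' x hx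
          have heq : (x + (w-1)) + 1 = x + w := by ring
          rw [heq] at step1
          calc |h (x + w) - h x| ≤ |h (x+w) - h (x + (w-1))| + |h (x + (w-1)) - h x| :=
                abs_sub_le _ _ _
            _ ≤ η + η * N := add_le_add step1 step2
            _ = η * ((N:ℝ) + 1) := by ring
  have hN := main ⌈w⌉₊ w hw (Nat.le_ceil w) x hx
  calc |h (x + w) - h x| ≤ η * ⌈w⌉₊ := hN
    _ ≤ η * (w + 1) := by
        have := Nat.ceil_lt_add_one hw
        nlinarith

/-- Potter bounds. -/
lemma potter (hLm : Measurable L) (hLpos : ∀ t > 0, 0 < L t)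
    (hsv : ∀ lam > 0, Tendsto (fun t => L (lam * t) / L t) atTop (𝓝 1))
    {η : ℝ} (hη : 0 < η) :
    ∃ X₁ : ℝ, 1 ≤ X₁ ∧ ∀ x ≥ X₁, ∀ lam ≥ 1,
      L x ≤ Real.exp η * lam ^ η * L (lam * x) ∧
      L (lam * x) ≤ Real.exp η * lam ^ η * L x := by
  obtain ⟨X₀, hX₀⟩ := slowh_chain hLm hLpos hsv hη
  refine ⟨max (Real.exp X₀) 1, le_max_right _ _, fun x hx lam hlam => ?_⟩
  have hx1 : (1:ℝ) ≤ x := le_trans (le_max_right _ _) hx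
  have hx0 : (0:ℝ) < x := lt_of_lt_of_le zero_lt_one hx1
  have hlam0 : (0:ℝ) < lam := lt_of_lt_of_le zero_lt_one hlam
  have hlx0 : (0:ℝ) < lam * x := by positivity
  have hlogx : X₀ ≤ Real.log x := by
    rw [Real.le_log_iff_exp_le hx0]
    exact le_trans (le_max_left _ _) hx
  set w := Real.log lam with hwdef
  have hw0 : 0 ≤ w := Real.log_nonneg hlam
  have hkey := hX₀ (Real.log x) hlogx w hw0
  have hexp : Real.log x + w = Real.log (lam * x) := by
    rw [Real.log_mul (ne_of_gt hlam0) (ne_of_gt hx0)]; ring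
  have hh1 : slowh L (Real.log x) = Real.log (L x) := by
    simp [slowh, Real.exp_log hx0]
  have hh2 : slowh L (Real.log x + w) = Real.log (L (lam * x)) := by
    rw [hexp]; simp [slowh, Real.exp_log hlx0]
  rw [hh1, hh2] at hkey
  have habs := abs_le.mp hkey
  have hLX : 0 < L x := hLpos x hx0
  have hLlx : 0 < L (lam * x) := hLpos _ hlx0
  have hrpow : Real.exp η * lam ^ η = Real.exp (η * (w + 1)) := by
    rw [Real.rpow_def_of_pos hlam0, ← Real.exp_add]
    ring_nf
    rw [hwdef]
  constructor
  · have : Real.log (L x) ≤ η * (w + 1) + Real.log (L (lam * x)) := by linarith [habs.1]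
    calc L x = Real.exp (Real.log (L x)) := (Real.exp_log hLX).symm
      _ ≤ Real.exp (η * (w+1) + Real.log (L (lam * x))) := Real.exp_le_exp.mpr this
      _ = Real.exp η * lam ^ η * L (lam * x) := by
          rw [Real.exp_add, Real.exp_log hLlx, hrpow]
  · have : Real.log (L (lam * x)) ≤ η * (w + 1) + Real.log (L x) := by linarith [habs.2]
    calc L (lam * x) = Real.exp (Real.log (L (lam * x))) := (Real.exp_log hLlx).symm
      _ ≤ Real.exp (η * (w+1) + Real.log (L x)) := Real.exp_le_exp.mpr this
      _ = Real.exp η * lam ^ η * L x := by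
          rw [Real.exp_add, Real.exp_log hLX, hrpow]

end SlowVar

section MoreAux

lemma exists_good_radius {d : ℕ} (μ : Measure (Vec d))
    (hfin : ∀ A : Set (Vec d), MeasurableSet A → 0 ∉ closure A → μ A < ⊤)
    {r₁ r₂ : ℝ} (h1 : 0 < r₁) (h12 : r₁ < r₂) :
    ∃ r, r₁ < r ∧ r < r₂ ∧ μ {q | ‖q‖ = r} = 0 := by
  set W : Set (Vec d) := {q | r₁ ≤ ‖q‖ ∧ ‖q‖ ≤ r₂} with hW
  have hWmeas : MeasurableSet W :=
    (measurableSet_le measurable_const measurable_norm).inter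
      (measurableSet_le measurable_norm measurable_const)
  have hWclosed : IsClosed W :=
    (isClosed_le continuous_const continuous_norm).inter
      (isClosed_le continuous_norm continuous_const)
  have h0W : (0 : Vec d) ∉ closure W := by
    rw [hWclosed.closure_eq]
    intro h
    have h2 : r₁ ≤ ‖(0 : Vec d)‖ := h.1
    rw [norm_zero] at h2
    linarith
  have hWfin : μ W ≠ ⊤ := (hfin W hWmeas h0W).ne
  set As : (Set.Ioo r₁ r₂) → Set (Vec d) := fun r => {q | ‖q‖ = (r:ℝ)} with hAs
  have hAsm : ∀ r, MeasurableSet (As r) := fun r =>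
    measurableSet_eq_fun measurable_norm measurable_const
  have hdisj : Pairwise (Function.onFun Disjoint As) := by
    intro r s hrs
    rw [Function.onFun, Set.disjoint_left]
    intro q hq hq'
    exact hrs (Subtype.ext (by rw [← hq, ← hq']))
  have hUn : μ (⋃ r, As r) ≠ ⊤ := by
    refine ne_top_of_le_ne_top hWfin (measure_mono (Set.iUnion_subset fun r q hq => ?_))
    have := r.2
    rw [Set.mem_Ioo] at this
    exact ⟨by rw [Set.mem_setOf_eq] at hq; rw [hq]; exact le_of_lt this.1,
      by rw [Set.mem_setOf_eq] at hq; rw [hq]; exact le_of_lt this.2⟩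
  have hcnt := MeasureTheory.Measure.countable_meas_pos_of_disjoint_of_meas_iUnion_ne_top
    μ hAsm hdisj hUn
  by_contra hcon
  push_neg at hcon
  have huniv : {r : Set.Ioo r₁ r₂ | 0 < μ (As r)} = Set.univ := by
    ext r
    simp only [Set.mem_setOf_eq, Set.mem_univ, iff_true, pos_iff_ne_zero]
    have := r.2; rw [Set.mem_Ioo] at this
    exact hcon (r:ℝ) this.1 this.2
  rw [huniv] at hcnt
  have hcnt2 : Countable (Set.Ioo r₁ r₂) := Set.countable_univ_iff.mp hcnt
  have hle : (Cardinal.mk (Set.Ioo r₁ r₂)) ≤ Cardinal.aleph0 :=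
    Cardinal.mk_le_aleph0
  rw [Cardinal.mk_Ioo_real h12] at hle
  exact absurd hle (not_le.mpr Cardinal.aleph0_lt_continuum)

lemma exists_shell {T₀ x : ℝ} (hT : 0 < T₀) (hx : T₀ ≤ x) :
    ∃ j : ℕ, T₀ * 2^j ≤ x ∧ x < T₀ * 2^(j+1) := by
  obtain ⟨J, hJ⟩ := pow_unbounded_of_one_lt (x / T₀) (one_lt_two (α := ℝ))
  have hex : ∃ j : ℕ, x < T₀ * 2^(j+1) := by
    refine ⟨J, ?_⟩
    have h2 : x < T₀ * 2^J := by
      rw [div_lt_iff₀ hT] at hJ; linarith [hJ]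
    refine lt_of_lt_of_le h2 ?_
    have h3 : (2:ℝ)^J ≤ 2^(J+1) := by
      apply pow_le_pow_right₀ one_le_two (Nat.le_succ J)
    nlinarith
  refine ⟨Nat.find hex, ?_, Nat.find_spec hex⟩
  rcases Nat.eq_zero_or_pos (Nat.find hex) with h0 | hpos
  · rw [h0]; simpa using hx
  · have hmin := Nat.find_min hex (Nat.pred_lt hpos.ne')
    push_neg at hmin
    rw [show (Nat.find hex).pred + 1 = Nat.find hex from Nat.succ_pred_eq_of_pos hpos] at hmin
    exact hmin

lemma ennreal_nat_mul_le {x : ℝ≥0∞} (hx : x ≠ ⊤) {n : ℕ} {C : ℝ}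
    (h : (n:ℝ) * x.toReal ≤ C) : (n:ℝ≥0∞) * x ≤ ENNReal.ofReal C := by
  calc (n:ℝ≥0∞) * x = ENNReal.ofReal ((n:ℝ) * x.toReal) := by
        rw [ENNReal.ofReal_mul (Nat.cast_nonneg n), ENNReal.ofReal_toReal hx,
          ENNReal.ofReal_natCast]
    _ ≤ ENNReal.ofReal C := ENNReal.ofReal_le_ofReal h

lemma ennreal_prod_bound {x y C₁ C₂ : ℝ≥0∞} {n : ℕ} (hn : n ≠ 0)
    (h1 : (n:ℝ≥0∞) * x ≤ C₁) (h2 : (n:ℝ≥0∞) * y ≤ C₂) :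
    (n:ℝ≥0∞) * (x * y) ≤ C₁ * C₂ * ((n:ℝ≥0∞))⁻¹ := by
  have hn0 : (n:ℝ≥0∞) ≠ 0 := Nat.cast_ne_zero.mpr hn
  have hnt : (n:ℝ≥0∞) ≠ ⊤ := ENNReal.natCast_ne_top n
  have key : (n:ℝ≥0∞) * (x * y) = (((n:ℝ≥0∞) * x) * ((n:ℝ≥0∞) * y)) * ((n:ℝ≥0∞))⁻¹ := by
    rw [mul_mul_mul_comm]
    rw [mul_comm ((n:ℝ≥0∞) * (n:ℝ≥0∞)) (x*y), mul_assoc]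
    rw [mul_assoc ((n:ℝ≥0∞)) ((n:ℝ≥0∞)) _, ENNReal.mul_inv_cancel hn0 hnt, mul_one]
    ring
  rw [key]
  exact mul_le_mul' (mul_le_mul' h1 h2) le_rfl

end MoreAux

set_option maxHeartbeats 4000000 in
/-- Under the hypotheses of Lemma 2.1, for every `t > 0` and `ε > 0`,
`n P(‖Y‖ > (1+ε) t aₙ, ‖Y + ΠQ‖ ≤ t aₙ) → 0`. -/
theorem stmt12 {Ω : Type*} [MeasurableSpace Ω] (P : Measure Ω) [IsProbabilityMeasure P]
    {d : ℕ} (hd : 1 ≤ d)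
    (Y Q : Ω → Vec d) (Pmat : Ω → Mat d)
    (hYm : Measurable Y) (hQm : Measurable Q) (hPm : Measurable Pmat)
    (hindep : IndepFun Q (fun ω => (Y ω, Pmat ω)) P)
    (α : ℝ) (a : ℝ → ℝ) (ν μ : Measure (Vec d))
    (hY : IsRegVar P Y α a ν) (hQ : IsRegVar P Q α a μ)
    (β : ℝ) (hβ : α < β)
    (hmom : ∫⁻ ω, ENNReal.ofReal (opNorm (Pmat ω) ^ β) ∂P < ⊤)
    (t ε : ℝ) (ht : 0 < t) (hε : 0 < ε) :
    Filter.Tendsto (fun n : ℕ => (n : ℝ) *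
        (P {ω | (1 + ε) * t * a n < ‖Y ω‖ ∧
          ‖Y ω + (Pmat ω).mulVec (Q ω)‖ ≤ t * a n}).toReal)
      Filter.atTop (nhds 0) := by
  classical
  obtain ⟨hα, hreg, hνfin, hνtend⟩ := hY
  obtain ⟨-, -, hμfin, hμtend⟩ := hQ
  obtain ⟨L, hLm, hLpos, hsv, haform⟩ := hreg
  -- positivity of the normalizing sequence
  have hapos : ∀ n : ℕ, 1 ≤ n → 0 < a n := by
    intro n hn
    have hn0 : (0:ℝ) < (n:ℝ) := by exact_mod_cast hn
    rw [haform _ hn0]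
    have hLn := hLpos _ hn0
    positivity
  have hβ0 : 0 < β := lt_trans hα hβ
  have hαβinv : 1/β < 1/α := by
    rw [div_lt_div_iff₀ hβ0 hα]
    linarith
  set η : ℝ := (1/α - 1/β)/2 with hηdef
  have hη : 0 < η := by rw [hηdef]; linarith
  set α' : ℝ := (1/α - η)⁻¹ with hα'def
  have hinv : 1/α - η = (1/α + 1/β)/2 := by rw [hηdef]; ring
  have hinvpos : 0 < 1/α - η := by
    rw [hinv]
    have : 0 < 1/α := by positivity
    have : 0 < 1/β := by positivity
    linarith
  have hα'pos : 0 < α' := by rw [hα'def]; exact inv_pos.mpr hinvpos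
  have hα'β : α' < β := by
    rw [hα'def]
    rw [inv_lt_comm₀ hinvpos hβ0]
    rw [hinv]
    have h1β : β⁻¹ = 1/β := (one_div β).symm
    rw [h1β]
    linarith
  -- good radii
  set c : ℝ := (1+ε)*t with hcdef
  have hc : 0 < c := by rw [hcdef]; positivity
  obtain ⟨c₁, hc₁l, hc₁r, hc₁null⟩ := exists_good_radius ν hνfin (half_pos hc) (half_lt_self hc)
  have hc₁pos : 0 < c₁ := lt_trans (half_pos hc) hc₁l
  obtain ⟨σ₀, hσ₀l, hσ₀r, hσ₀null⟩ :=
    exists_good_radius μ hμfin one_half_pos (by norm_num : (1:ℝ)/2 < 1)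
  have hσ₀pos : 0 < σ₀ := lt_trans one_half_pos hσ₀l
  have hσ₀1 : σ₀ ≤ 1 := le_of_lt hσ₀r
  -- eventual bound for Y at radius c₁
  have hbound : ∀ (X : Ω → Vec d) (ξ : Measure (Vec d)) (r : ℝ), 0 < r →
      ξ {q | ‖q‖ = r} = 0 →
      (∀ A : Set (Vec d), MeasurableSet A → 0 ∉ closure A → ξ (frontier A) = 0 →
        Filter.Tendsto (fun n : ℕ => (n : ℝ) * (P {ω | (a n)⁻¹ • X ω ∈ A}).toReal)
          Filter.atTop (nhds (ξ A).toReal)) →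
      ∀ᶠ n : ℕ in atTop, (n:ℝ≥0∞) * P {ω | r * a n ≤ ‖X ω‖} ≤
        ENNReal.ofReal ((ξ {y | r ≤ ‖y‖}).toReal + 1) := by
    intro X ξ r hr hnull htend
    set A : Set (Vec d) := {y | r ≤ ‖y‖} with hA
    have hAmeas : MeasurableSet A := measurableSet_le measurable_const measurable_norm
    have hAcl : (0 : Vec d) ∉ closure A := by
      rw [(isClosed_le continuous_const continuous_norm).closure_eq]
      intro hmem
      have : r ≤ ‖(0 : Vec d)‖ := hmem
      rw [norm_zero] at this
      linarith
    have hAfr : ξ (frontier A) = 0 := by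
      refine measure_mono_null ?_ hnull
      intro y hy
      have := frontier_le_subset_eq (f := fun _ : Vec d => r) (g := fun y : Vec d => ‖y‖)
        continuous_const continuous_norm hy
      exact this.symm
    have htd := htend A hAmeas hAcl hAfr
    have h1 : ∀ᶠ n : ℕ in atTop,
        (n:ℝ) * (P {ω | (a n)⁻¹ • X ω ∈ A}).toReal < (ξ A).toReal + 1 :=
      htd.eventually_lt_const (lt_add_one _)
    filter_upwards [h1, eventually_ge_atTop 1] with n hn hn1
    have han := hapos n hn1
    have hsets : {ω | (a n)⁻¹ • X ω ∈ A} = {ω | r * a n ≤ ‖X ω‖} := by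
      ext ω
      simp only [hA, Set.mem_setOf_eq, norm_smul, norm_inv, Real.norm_eq_abs,
        abs_of_pos han]
      rw [inv_mul_eq_div, le_div_iff₀ han]
    rw [← hsets]
    exact ennreal_nat_mul_le (measure_ne_top P _) (le_of_lt hn)
  set CYr : ℝ := (ν {y | c₁ ≤ ‖y‖}).toReal + 1 with hCYrdef
  set CQr : ℝ := (μ {y | σ₀ ≤ ‖y‖}).toReal + 1 with hCQrdef
  have hCYr : 0 < CYr := by
    rw [hCYrdef]; positivity
  have hCQr : 0 < CQr := by
    rw [hCQrdef]; positivity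
  have hCYev : ∀ᶠ n : ℕ in atTop, (n:ℝ≥0∞) * P {ω | c₁ * a n ≤ ‖Y ω‖} ≤
      ENNReal.ofReal CYr := hbound Y ν c₁ hc₁pos hc₁null hνtend
  have hCQev : ∀ᶠ n : ℕ in atTop, (n:ℝ≥0∞) * P {ω | σ₀ * a n ≤ ‖Q ω‖} ≤
      ENNReal.ofReal CQr := hbound Q μ σ₀ hσ₀pos hσ₀null hμtend
  obtain ⟨N₂, hN₂⟩ := eventually_atTop.mp hCQev
  -- Potter bounds for L
  obtain ⟨X₁, hX₁1, hpot⟩ := potter hLm hLpos hsv hη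
  -- uniform tail bound for Q
  have hUnif : ∃ Cu : ℝ, 0 < Cu ∧ ∀ n : ℕ, ∀ s : ℝ, 0 < s → s ≤ σ₀ →
      (n:ℝ≥0∞) * P {ω | s * a n ≤ ‖Q ω‖} ≤ ENNReal.ofReal (Cu * s ^ (-α')) := by
    set eη : ℝ := Real.exp η with heηdef
    have heη1 : 1 ≤ eη := Real.one_le_exp (le_of_lt hη)
    have heηpos : 0 < eη := lt_of_lt_of_le zero_lt_one heη1
    set K₁ : ℕ := max N₂ ⌈X₁⌉₊ + 1 with hK₁def
    have hK₁1 : 1 ≤ K₁ := Nat.le_add_left 1 _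
    have hK₁N₂ : N₂ ≤ K₁ := le_trans (le_max_left _ _) (Nat.le_succ _)
    have hK₁X₁ : X₁ ≤ (K₁:ℝ) := by
      calc X₁ ≤ (⌈X₁⌉₊:ℝ) := Nat.le_ceil X₁
        _ ≤ (K₁:ℝ) := by exact_mod_cast le_trans (le_max_right N₂ _) (Nat.le_succ _)
    set D : ℝ := (σ₀*eη)^α' with hDdef
    have hD : 0 < D := Real.rpow_pos_of_pos (by positivity) _
    refine ⟨2 * max CQr (K₁:ℝ) * D, by positivity, ?_⟩
    intro n s hs hsσ
    have hsneg : 0 < s^(-α') := Real.rpow_pos_of_pos hs _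
    set ρ : ℝ := (s/(σ₀*eη))^α' with hρdef
    have hρpos : 0 < ρ := Real.rpow_pos_of_pos (by positivity) _
    have hρ1 : ρ ≤ 1 := by
      apply Real.rpow_le_one (by positivity)
      · rw [div_le_one (by positivity)]
        calc s ≤ σ₀ := hsσ
          _ = σ₀ * 1 := (mul_one σ₀).symm
          _ ≤ σ₀ * eη := mul_le_mul_of_nonneg_left heη1 (le_of_lt hσ₀pos)
      · exact le_of_lt hα'pos
    have hρinv : ρ⁻¹ = D * s^(-α') := by
      rw [hρdef, Real.div_rpow (le_of_lt hs) (by positivity : (0:ℝ) ≤ σ₀*eη)]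
      rw [Real.rpow_neg (le_of_lt hs), hDdef, inv_div, div_eq_mul_inv]
    have hmaxD : 2*(K₁:ℝ)*(D * s^(-α')) ≤ 2 * max CQr (K₁:ℝ) * D * s^(-α') := by
      have h1 : (K₁:ℝ) ≤ max CQr (K₁:ℝ) := le_max_right _ _
      have h2 := mul_le_mul_of_nonneg_right h1 (le_of_lt (mul_pos hD hsneg))
      linarith only [h2]
    by_cases hcase : (n:ℝ) * ρ < 2 * (K₁:ℝ)
    · -- trivial bound for small n
      have hP1 : P {ω | s * a n ≤ ‖Q ω‖} ≤ 1 := prob_le_one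
      calc (n:ℝ≥0∞) * P {ω | s * a n ≤ ‖Q ω‖} ≤ (n:ℝ≥0∞) * 1 := mul_le_mul_right hP1 _
        _ = ENNReal.ofReal (n:ℝ) := by rw [mul_one, ENNReal.ofReal_natCast]
        _ ≤ ENNReal.ofReal (2 * max CQr (K₁:ℝ) * D * s^(-α')) := by
            apply ENNReal.ofReal_le_ofReal
            have hn2 : (n:ℝ) < 2*(K₁:ℝ) / ρ := (lt_div_iff₀ hρpos).mpr hcase
            rw [div_eq_mul_inv, hρinv] at hn2
            linarith only [hmaxD, hn2]
    · push_neg at hcase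
      set k : ℕ := ⌊(n:ℝ) * ρ⌋₊ with hkdef
      have hnρ0 : 0 ≤ (n:ℝ)*ρ := by positivity
      have hk_le : (k:ℝ) ≤ (n:ℝ)*ρ := Nat.floor_le hnρ0
      have hk_gt : (n:ℝ)*ρ - 1 < (k:ℝ) := by
        have h1 := Nat.lt_floor_add_one ((n:ℝ)*ρ)
        linarith only [h1]
      have hK₁R : (1:ℝ) ≤ (K₁:ℝ) := by exact_mod_cast hK₁1
      have hnρ2 : (2:ℝ) ≤ (n:ℝ)*ρ := by linarith only [hcase, hK₁R]
      have hk_half : (n:ℝ)*ρ/2 ≤ (k:ℝ) := by linarith only [hk_gt, hnρ2]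
      have hkK₁ : (K₁:ℝ) ≤ (k:ℝ) := by linarith only [hk_half, hcase]
      have hkN₂ : N₂ ≤ k := by
        have hcast : (N₂:ℝ) ≤ (k:ℝ) := le_trans (by exact_mod_cast hK₁N₂) hkK₁
        exact_mod_cast hcast
      have hk1 : 1 ≤ k := by
        have hcast : (1:ℝ) ≤ (k:ℝ) := le_trans hK₁R hkK₁
        exact_mod_cast hcast
      have hk0R : (0:ℝ) < (k:ℝ) := by
        have hcast : (1:ℝ) ≤ (k:ℝ) := le_trans hK₁R hkK₁
        linarith only [hcast]
      have hkn : (k:ℝ) ≤ (n:ℝ) := by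
        calc (k:ℝ) ≤ (n:ℝ)*ρ := hk_le
          _ ≤ (n:ℝ)*1 := mul_le_mul_of_nonneg_left hρ1 (Nat.cast_nonneg n)
          _ = (n:ℝ) := mul_one _
      have hkX₁ : X₁ ≤ (k:ℝ) := le_trans hK₁X₁ hkK₁
      have hn0 : (0:ℝ) < (n:ℝ) := lt_of_lt_of_le hk0R hkn
      -- Potter comparison : σ₀ * a k ≤ s * a n
      have hcomp : σ₀ * a k ≤ s * a n := by
        have hlam1 : (1:ℝ) ≤ (n:ℝ)/(k:ℝ) := (one_le_div hk0R).mpr hkn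
        have hlamk : ((n:ℝ)/(k:ℝ)) * (k:ℝ) = (n:ℝ) := div_mul_cancel₀ _ (ne_of_gt hk0R)
        have hpotk := (hpot (k:ℝ) hkX₁ ((n:ℝ)/(k:ℝ)) hlam1).1
        rw [hlamk] at hpotk
        have hLn := hLpos (n:ℝ) hn0
        have hLk := hLpos (k:ℝ) hk0R
        rw [haform (k:ℝ) hk0R, haform (n:ℝ) hn0]
        have hkpow : (0:ℝ) < (k:ℝ)^(1/α) := Real.rpow_pos_of_pos hk0R _
        have step1 : σ₀ * ((k:ℝ)^(1/α) * L (k:ℝ)) ≤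
            σ₀ * (k:ℝ)^(1/α) * (eη * ((n:ℝ)/(k:ℝ))^η * L (n:ℝ)) := by
          have h2 := mul_le_mul_of_nonneg_left hpotk (le_of_lt (mul_pos hσ₀pos hkpow))
          calc σ₀ * ((k:ℝ)^(1/α) * L (k:ℝ)) = (σ₀ * (k:ℝ)^(1/α)) * L (k:ℝ) := by ring
            _ ≤ (σ₀ * (k:ℝ)^(1/α)) * (eη * ((n:ℝ)/(k:ℝ))^η * L (n:ℝ)) := h2
            _ = σ₀ * (k:ℝ)^(1/α) * (eη * ((n:ℝ)/(k:ℝ))^η * L (n:ℝ)) := by ring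
        have hnη : (0:ℝ) < (n:ℝ)^η := Real.rpow_pos_of_pos hn0 _
        have hkη : (0:ℝ) < (k:ℝ)^η := Real.rpow_pos_of_pos hk0R _
        have e1 : (k:ℝ)^(1/α) * (((n:ℝ)/(k:ℝ))^η) =
            ((k:ℝ)^(1/α - η)) * (n:ℝ)^η := by
          rw [Real.div_rpow (le_of_lt hn0) (le_of_lt hk0R),
            Real.rpow_sub hk0R]
          field_simp
        have e2 : (n:ℝ)^(1/α) = ((n:ℝ)^(1/α - η)) * (n:ℝ)^η := by
          rw [← Real.rpow_add hn0]
          ring_nf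
        have e3 : (k:ℝ)^(1/α - η) ≤ ((n:ℝ)*ρ)^(1/α - η) :=
          Real.rpow_le_rpow (le_of_lt hk0R) hk_le (le_of_lt hinvpos)
        have e4 : ((n:ℝ)*ρ)^(1/α - η) = (n:ℝ)^(1/α - η) * ρ^(1/α - η) :=
          Real.mul_rpow (le_of_lt hn0) (le_of_lt hρpos)
        have hbase : (0:ℝ) ≤ s/(σ₀*eη) := by positivity
        have hne : σ₀*eη ≠ 0 := ne_of_gt (mul_pos hσ₀pos heηpos)
        have e5 : ρ^(1/α - η) = s/(σ₀*eη) := by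
          rw [hρdef, ← Real.rpow_mul hbase]
          rw [show α' * (1/α - η) = 1 from by
            rw [hα'def]; exact inv_mul_cancel₀ (ne_of_gt hinvpos)]
          exact Real.rpow_one _
        have key : σ₀ * (k:ℝ)^(1/α) * (eη * ((n:ℝ)/(k:ℝ))^η) ≤ s * (n:ℝ)^(1/α) := by
          have lhs_eq : σ₀ * (k:ℝ)^(1/α) * (eη * ((n:ℝ)/(k:ℝ))^η) =
              σ₀ * eη * ((k:ℝ)^(1/α - η) * (n:ℝ)^η) := by
            rw [← e1]; ring
          rw [lhs_eq, e2]
          have e6 : (k:ℝ)^(1/α-η) ≤ (n:ℝ)^(1/α-η) * (s/(σ₀*eη)) := by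
            rw [← e5, ← e4]; exact e3
          have hmain : σ₀ * eη * (k:ℝ)^(1/α-η) ≤ s * (n:ℝ)^(1/α-η) := by
            have e7 := mul_le_mul_of_nonneg_left e6 (le_of_lt (mul_pos hσ₀pos heηpos))
            calc σ₀ * eη * (k:ℝ)^(1/α-η) = (σ₀*eη) * (k:ℝ)^(1/α-η) := by ring
              _ ≤ (σ₀*eη) * ((n:ℝ)^(1/α-η) * (s/(σ₀*eη))) := e7
              _ = s * (n:ℝ)^(1/α-η) := by field_simp
          calc σ₀ * eη * ((k:ℝ)^(1/α-η) * (n:ℝ)^η)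
              = (σ₀ * eη * (k:ℝ)^(1/α-η)) * (n:ℝ)^η := by ring
            _ ≤ (s * (n:ℝ)^(1/α-η)) * (n:ℝ)^η := mul_le_mul_of_nonneg_right hmain (le_of_lt hnη)
            _ = s * ((n:ℝ)^(1/α-η) * (n:ℝ)^η) := by ring
        calc σ₀ * ((k:ℝ)^(1/α) * L (k:ℝ))
            ≤ σ₀ * (k:ℝ)^(1/α) * (eη * ((n:ℝ)/(k:ℝ))^η * L (n:ℝ)) := step1
          _ = (σ₀ * (k:ℝ)^(1/α) * (eη * ((n:ℝ)/(k:ℝ))^η)) * L (n:ℝ) := by ring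
          _ ≤ (s * (n:ℝ)^(1/α)) * L (n:ℝ) := mul_le_mul_of_nonneg_right key (le_of_lt hLn)
          _ = s * ((n:ℝ)^(1/α) * L (n:ℝ)) := by ring
      -- conclude the uniform bound
      have hsub : {ω | s * a n ≤ ‖Q ω‖} ⊆ {ω | σ₀ * a (k:ℕ) ≤ ‖Q ω‖} :=
        fun ω hω => le_trans hcomp hω
      have hQk := hN₂ k hkN₂
      have hkn0 : (k:ℝ≥0∞) ≠ 0 := by
        simp only [ne_eq, Nat.cast_eq_zero]
        omega
      have hkent : (k:ℝ≥0∞) ≠ ⊤ := ENNReal.natCast_ne_top k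
      have hPk : P {ω | σ₀ * a k ≤ ‖Q ω‖} ≤ ENNReal.ofReal CQr * ((k:ℝ≥0∞))⁻¹ := by
        calc P {ω | σ₀ * a k ≤ ‖Q ω‖}
            = ((k:ℝ≥0∞))⁻¹ * ((k:ℝ≥0∞) * P {ω | σ₀ * a k ≤ ‖Q ω‖}) := by
              rw [← mul_assoc, ENNReal.inv_mul_cancel hkn0 hkent, one_mul]
          _ ≤ ((k:ℝ≥0∞))⁻¹ * ENNReal.ofReal CQr := mul_le_mul_right hQk _
          _ = ENNReal.ofReal CQr * ((k:ℝ≥0∞))⁻¹ := mul_comm _ _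
      have hnk : (n:ℝ≥0∞) * ((k:ℝ≥0∞))⁻¹ ≤ ENNReal.ofReal (2/ρ) := by
        have hreal : (n:ℝ) ≤ (2/ρ) * (k:ℝ) := by
          rw [div_mul_eq_mul_div, le_div_iff₀ hρpos]
          linarith only [hk_half]
        have henn : (n:ℝ≥0∞) ≤ ENNReal.ofReal (2/ρ) * (k:ℝ≥0∞) := by
          rw [← ENNReal.ofReal_natCast n, ← ENNReal.ofReal_natCast k,
            ← ENNReal.ofReal_mul (by positivity : (0:ℝ) ≤ 2/ρ)]
          exact ENNReal.ofReal_le_ofReal hreal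
        calc (n:ℝ≥0∞) * ((k:ℝ≥0∞))⁻¹ ≤ (ENNReal.ofReal (2/ρ) * (k:ℝ≥0∞)) * ((k:ℝ≥0∞))⁻¹ :=
              mul_le_mul_left henn _
          _ = ENNReal.ofReal (2/ρ) := by
              rw [mul_assoc, ENNReal.mul_inv_cancel hkn0 hkent, mul_one]
      calc (n:ℝ≥0∞) * P {ω | s * a n ≤ ‖Q ω‖}
          ≤ (n:ℝ≥0∞) * P {ω | σ₀ * a k ≤ ‖Q ω‖} := mul_le_mul_right (measure_mono hsub) _
        _ ≤ (n:ℝ≥0∞) * (ENNReal.ofReal CQr * ((k:ℝ≥0∞))⁻¹) := mul_le_mul_right hPk _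
        _ = ENNReal.ofReal CQr * ((n:ℝ≥0∞) * ((k:ℝ≥0∞))⁻¹) := by ring
        _ ≤ ENNReal.ofReal CQr * ENNReal.ofReal (2/ρ) := mul_le_mul_right hnk _
        _ = ENNReal.ofReal (CQr * (2/ρ)) :=
            (ENNReal.ofReal_mul (le_of_lt hCQr)).symm
        _ ≤ ENNReal.ofReal (2 * max CQr (K₁:ℝ) * D * s^(-α')) := by
            apply ENNReal.ofReal_le_ofReal
            rw [div_eq_mul_inv, hρinv]
            have h1 : CQr ≤ max CQr (K₁:ℝ) := le_max_left _ _
            have h2 := mul_le_mul_of_nonneg_right h1 (le_of_lt (mul_pos hD hsneg))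
            linarith only [h2]
  obtain ⟨Cu, hCu, hUnifB⟩ := hUnif
  -- measurability and basic objects
  have hopm : Measurable fun ω => opNorm (Pmat ω) := measurable_opNorm.comp hPm
  set T₀ : ℝ := ε * t / σ₀ with hT₀def
  have hT₀ : 0 < T₀ := by rw [hT₀def]; positivity
  set g : Ω → ℝ≥0∞ := fun ω => ENNReal.ofReal (opNorm (Pmat ω) ^ β) with hgdef
  have hgm : Measurable g :=
    Measurable.ennreal_ofReal ((Real.continuous_rpow_const (le_of_lt hβ0)).measurable.comp hopm)
  set Dn : ℕ → Set Ω := fun n => {ω | c₁ * a n ≤ ‖Y ω‖} with hDndef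
  have hDnmeas : ∀ n, MeasurableSet (Dn n) := fun n =>
    measurableSet_le measurable_const hYm.norm
  set I : ℕ → ℝ≥0∞ := fun n => ∫⁻ ω in Dn n, g ω ∂P with hIdef
  have hPDn0 : Tendsto (fun n => P (Dn n)) atTop (𝓝 0) := by
    have hup : Tendsto (fun n : ℕ => ENNReal.ofReal CYr * ((n:ℝ≥0∞))⁻¹) atTop (𝓝 0) := by
      have h := ENNReal.Tendsto.const_mul (a := ENNReal.ofReal CYr)
        ENNReal.tendsto_inv_nat_nhds_zero (Or.inr ENNReal.ofReal_ne_top)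
      simpa using h
    refine tendsto_of_tendsto_of_tendsto_of_le_of_le' tendsto_const_nhds hup
      (Eventually.of_forall (fun n => zero_le)) ?_
    filter_upwards [hCYev, eventually_ge_atTop 1] with n hn hn1
    have hn0 : (n:ℝ≥0∞) ≠ 0 := by
      simp only [ne_eq, Nat.cast_eq_zero]; omega
    have hnt : (n:ℝ≥0∞) ≠ ⊤ := ENNReal.natCast_ne_top n
    calc P (Dn n) = ((n:ℝ≥0∞))⁻¹ * ((n:ℝ≥0∞) * P (Dn n)) := by
          rw [← mul_assoc, ENNReal.inv_mul_cancel hn0 hnt, one_mul]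
      _ ≤ ((n:ℝ≥0∞))⁻¹ * ENNReal.ofReal CYr := mul_le_mul_right hn _
      _ = ENNReal.ofReal CYr * ((n:ℝ≥0∞))⁻¹ := mul_comm _ _
  have hI0 : Tendsto I atTop (𝓝 0) := tendsto_setLIntegral_zero hmom.ne hPDn0
  -- Markov bound on shells
  have hmarkov : ∀ n : ℕ, ∀ Tj : ℝ, 0 < Tj →
      P (Dn n ∩ {ω | Tj ≤ opNorm (Pmat ω)}) ≤ ENNReal.ofReal (Tj ^ (-β)) * I n := by
    intro n Tj hTj
    have hTjb : (0:ℝ) < Tj ^ β := Real.rpow_pos_of_pos hTj _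
    have heq : P (Dn n ∩ {ω | Tj ≤ opNorm (Pmat ω)}) =
        (P.restrict (Dn n)) {ω | Tj ≤ opNorm (Pmat ω)} := by
      rw [Measure.restrict_apply (measurableSet_le measurable_const hopm), Set.inter_comm]
    rw [heq]
    have hsub : {ω | Tj ≤ opNorm (Pmat ω)} ⊆ {ω | ENNReal.ofReal (Tj ^ β) ≤ g ω} := by
      intro ω hω
      exact ENNReal.ofReal_le_ofReal (Real.rpow_le_rpow (le_of_lt hTj) hω (le_of_lt hβ0))
    have hmkv := mul_meas_ge_le_lintegral₀ (μ := P.restrict (Dn n))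
      hgm.aemeasurable (ENNReal.ofReal (Tj ^ β))
    have hε0 : ENNReal.ofReal (Tj ^ β) ≠ 0 := by
      simp only [ne_eq, ENNReal.ofReal_eq_zero, not_le]
      exact hTjb
    have hεt : ENNReal.ofReal (Tj ^ β) ≠ ⊤ := ENNReal.ofReal_ne_top
    calc (P.restrict (Dn n)) {ω | Tj ≤ opNorm (Pmat ω)}
        ≤ (P.restrict (Dn n)) {ω | ENNReal.ofReal (Tj ^ β) ≤ g ω} := measure_mono hsub
      _ = (ENNReal.ofReal (Tj ^ β))⁻¹ * (ENNReal.ofReal (Tj ^ β) *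
            (P.restrict (Dn n)) {ω | ENNReal.ofReal (Tj ^ β) ≤ g ω}) := by
          rw [← mul_assoc, ENNReal.inv_mul_cancel hε0 hεt, one_mul]
      _ ≤ (ENNReal.ofReal (Tj ^ β))⁻¹ * I n := mul_le_mul_right hmkv _
      _ = ENNReal.ofReal (Tj ^ (-β)) * I n := by
          rw [Real.rpow_neg (le_of_lt hTj), ENNReal.ofReal_inv_of_pos hTjb]
  -- geometric constant
  set q2 : ℝ := (2:ℝ) ^ (α' - β) with hq2def
  have hq2pos : 0 < q2 := Real.rpow_pos_of_pos two_pos _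
  have hq2lt : q2 < 1 :=
    Real.rpow_lt_one_of_one_lt_of_neg one_lt_two (by linarith only [hα'β])
  set K₂ : ℝ := Cu * σ₀^(-α') * (2:ℝ)^α' * T₀^(-β) with hK₂def
  have hK₂pos : 0 < K₂ := by
    have p1 := Real.rpow_pos_of_pos hσ₀pos (-α')
    have p2 := Real.rpow_pos_of_pos (two_pos (α := ℝ)) α'
    have p3 := Real.rpow_pos_of_pos hT₀ (-β)
    positivity
  have hcoef : ∀ j : ℕ, Cu * (σ₀/2^(j+1)) ^ (-α') * ((T₀ * 2^j) ^ (-β)) = K₂ * q2 ^ j := by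
    intro j
    have h2jpos : (0:ℝ) < (2:ℝ)^j := by positivity
    have h2j1pos : (0:ℝ) < (2:ℝ)^(j+1) := by positivity
    have hA : (σ₀/2^(j+1)) ^ (-α') = σ₀^(-α') * ((2:ℝ)^(j+1)) ^ α' := by
      rw [Real.div_rpow (le_of_lt hσ₀pos) (le_of_lt h2j1pos)]
      rw [Real.rpow_neg (le_of_lt h2j1pos), div_eq_mul_inv, inv_inv]
    have hB : ((T₀*2^j) ^ (-β)) = T₀^(-β) * ((2:ℝ)^j)^(-β) :=
      Real.mul_rpow (le_of_lt hT₀) (le_of_lt h2jpos)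
    have hC : (((2:ℝ)^(j+1)) : ℝ) ^ α' = ((2:ℝ)^j)^α' * (2:ℝ)^α' := by
      rw [pow_succ]
      exact Real.mul_rpow (le_of_lt h2jpos) (by norm_num)
    have hD2 : ((2:ℝ)^j)^α' * ((2:ℝ)^j)^(-β) = ((2:ℝ)^j)^(α' - β) := by
      rw [← Real.rpow_add h2jpos]
      ring_nf
    have hE : ((2:ℝ)^j)^(α'-β) = q2 ^ j := by
      rw [← Real.rpow_natCast (2:ℝ) j, ← Real.rpow_mul (by norm_num : (0:ℝ) ≤ 2)]
      rw [mul_comm ((j:ℝ)) (α'-β), Real.rpow_mul (by norm_num : (0:ℝ) ≤ 2)]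
      rw [hq2def, Real.rpow_natCast]
    rw [hA, hB, hC, hK₂def]
    rw [← hE, ← hD2]
    ring
  set KENN : ℝ≥0∞ := ENNReal.ofReal K₂ * (1 - ENNReal.ofReal q2)⁻¹ with hKENNdef
  have hKfin : KENN ≠ ⊤ := by
    rw [hKENNdef]
    refine ENNReal.mul_ne_top ENNReal.ofReal_ne_top ?_
    rw [ENNReal.inv_ne_top]
    refine ne_of_gt ?_
    rw [tsub_pos_iff_lt]
    exact ENNReal.ofReal_lt_one.mpr hq2lt
  have hgeom : (∑' j:ℕ, ENNReal.ofReal (K₂ * q2 ^ j)) = KENN := by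
    have heach : ∀ j:ℕ, ENNReal.ofReal (K₂ * q2 ^ j) =
        ENNReal.ofReal K₂ * (ENNReal.ofReal q2)^j := by
      intro j
      rw [ENNReal.ofReal_mul (le_of_lt hK₂pos), ENNReal.ofReal_pow (le_of_lt hq2pos)]
    simp_rw [heach]
    rw [ENNReal.tsum_mul_left, ENNReal.tsum_geometric, hKENNdef]
  -- the event
  set E : ℕ → Set Ω := fun n => {ω | (1 + ε) * t * a n < ‖Y ω‖ ∧
    ‖Y ω + (Pmat ω).mulVec (Q ω)‖ ≤ t * a n} with hEdef
  -- master eventual bound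
  have hmaster : ∀ᶠ n : ℕ in atTop, (n:ℝ≥0∞) * P (E n) ≤
      ENNReal.ofReal CQr * ENNReal.ofReal CYr * ((n:ℝ≥0∞))⁻¹ + KENN * I n := by
    filter_upwards [hCYev, hCQev, eventually_ge_atTop 1] with n hCY hCQ hn1
    have hnne : n ≠ 0 := by omega
    have han := hapos n hn1
    have hEsub : ∀ ω ∈ E n, c₁ * a n ≤ ‖Y ω‖ ∧
        ε * t * a n < opNorm (Pmat ω) * ‖Q ω‖ := by
      rintro ω ⟨h1, h2⟩
      constructor
      · have hcc : c₁ * a n ≤ c * a n :=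
          mul_le_mul_of_nonneg_right (le_of_lt hc₁r) (le_of_lt han)
        have hca : c * a n = (1+ε)*t*a n := by rw [hcdef]
        calc c₁ * a n ≤ c * a n := hcc
          _ = (1+ε)*t*a n := hca
          _ ≤ ‖Y ω‖ := le_of_lt h1
      · have htri : ‖Y ω‖ ≤ ‖Y ω + (Pmat ω).mulVec (Q ω)‖ + ‖(Pmat ω).mulVec (Q ω)‖ :=
          norm_le_add_norm_add _ _
        have hop := opNorm_mulVec_le (Pmat ω) (Q ω)
        have hPQ : ε * t * a n < ‖(Pmat ω).mulVec (Q ω)‖ := by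
          linarith only [h1, h2, htri]
        linarith only [hPQ, hop]
    set SA : Set Ω := Q ⁻¹' {y : Vec d | σ₀ * a n ≤ ‖y‖} ∩
      (fun ω => (Y ω, Pmat ω)) ⁻¹' {p : Vec d × Mat d | c₁ * a n ≤ ‖p.1‖} with hSAdef
    set SB : ℕ → Set Ω := fun j => Q ⁻¹' {y : Vec d | (σ₀/2^(j+1)) * a n ≤ ‖y‖} ∩
      (fun ω => (Y ω, Pmat ω)) ⁻¹' {p : Vec d × Mat d | c₁ * a n ≤ ‖p.1‖ ∧
        T₀ * 2^j ≤ opNorm p.2} with hSBdef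
    have hcover : E n ⊆ SA ∪ ⋃ j, SB j := by
      intro ω hω
      obtain ⟨hY1, hPQ⟩ := hEsub ω hω
      by_cases hQbig : σ₀ * a n ≤ ‖Q ω‖
      · exact Or.inl ⟨hQbig, hY1⟩
      · push_neg at hQbig
        right
        have hQnn : 0 ≤ ‖Q ω‖ := norm_nonneg _
        have hεt' : ε * t = T₀ * σ₀ := by
          rw [hT₀def]; field_simp
        have hopT : T₀ ≤ opNorm (Pmat ω) := by
          by_contra hlt
          push_neg at hlt
          have h3 : opNorm (Pmat ω) * ‖Q ω‖ ≤ T₀ * (σ₀ * a n) := by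
            have := mul_le_mul (le_of_lt hlt) (le_of_lt hQbig) hQnn (le_of_lt hT₀)
            linarith only [this]
          have h4 : T₀ * (σ₀ * a n) = ε * t * a n := by rw [hεt']; ring
          rw [h4] at h3
          linarith only [hPQ, h3]
        obtain ⟨j, hj1, hj2⟩ := exists_shell hT₀ hopT
        have h5 : opNorm (Pmat ω) * ‖Q ω‖ ≤ (T₀ * 2^(j+1)) * ‖Q ω‖ :=
          mul_le_mul_of_nonneg_right (le_of_lt hj2) hQnn
        have h6 : ε * t * a n < (T₀ * 2^(j+1)) * ‖Q ω‖ := lt_of_lt_of_le hPQ h5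
        have h6' : T₀ * (σ₀ * a n) < T₀ * (2^(j+1) * ‖Q ω‖) := by
          calc T₀ * (σ₀ * a n) = ε * t * a n := by rw [hεt']; ring
            _ < (T₀ * 2^(j+1)) * ‖Q ω‖ := h6
            _ = T₀ * (2^(j+1) * ‖Q ω‖) := by ring
        have h7' : σ₀ * a n < 2^(j+1) * ‖Q ω‖ :=
          lt_of_mul_lt_mul_left h6' (le_of_lt hT₀)
        have h7 : (σ₀/2^(j+1)) * a n ≤ ‖Q ω‖ := by
          rw [div_mul_eq_mul_div, div_le_iff₀ (by positivity : (0:ℝ) < (2:ℝ)^(j+1))]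
          linarith only [h7']
        exact Set.mem_iUnion.mpr ⟨j, ⟨h7, hY1, hj1⟩⟩
    have hmeasA1 : MeasurableSet {y : Vec d | σ₀ * a n ≤ ‖y‖} :=
      measurableSet_le measurable_const measurable_norm
    have hmeasA2 : MeasurableSet {p : Vec d × Mat d | c₁ * a n ≤ ‖p.1‖} :=
      measurableSet_le measurable_const measurable_fst.norm
    have hmeasB1 : ∀ j:ℕ, MeasurableSet {y : Vec d | (σ₀/2^(j+1)) * a n ≤ ‖y‖} :=
      fun j => measurableSet_le measurable_const measurable_norm
    have hmeasB2 : ∀ j:ℕ, MeasurableSet {p : Vec d × Mat d | c₁ * a n ≤ ‖p.1‖ ∧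
        T₀ * 2^j ≤ opNorm p.2} :=
      fun j => (measurableSet_le measurable_const measurable_fst.norm).inter
        (measurableSet_le measurable_const (measurable_opNorm.comp measurable_snd))
    have hAbound : (n:ℝ≥0∞) * P SA ≤
        ENNReal.ofReal CQr * ENNReal.ofReal CYr * ((n:ℝ≥0∞))⁻¹ := by
      rw [hSAdef, hindep.measure_inter_preimage_eq_mul _ _ hmeasA1 hmeasA2]
      exact ennreal_prod_bound hnne hCQ hCY
    have hperj : ∀ j : ℕ, (n:ℝ≥0∞) * P (SB j) ≤ ENNReal.ofReal (K₂ * q2 ^ j) * I n := by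
      intro j
      have hsj : (0:ℝ) < σ₀/2^(j+1) := by positivity
      have hsjσ : σ₀/2^(j+1) ≤ σ₀ := by
        rw [div_le_iff₀ (by positivity : (0:ℝ) < (2:ℝ)^(j+1))]
        have h21 : (1:ℝ) ≤ 2^(j+1) := one_le_pow₀ (by norm_num)
        have := mul_le_mul_of_nonneg_left h21 (le_of_lt hσ₀pos)
        linarith only [this]
      have hQj := hUnifB n (σ₀/2^(j+1)) hsj hsjσ
      have hPB := hmarkov n (T₀*2^j) (by positivity)
      have hfact : P (SB j) = P (Q ⁻¹' {y : Vec d | (σ₀/2^(j+1)) * a n ≤ ‖y‖}) *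
          P ((fun ω => (Y ω, Pmat ω)) ⁻¹' {p : Vec d × Mat d | c₁ * a n ≤ ‖p.1‖ ∧
            T₀ * 2^j ≤ opNorm p.2}) := by
        rw [hSBdef]
        exact hindep.measure_inter_preimage_eq_mul _ _ (hmeasB1 j) (hmeasB2 j)
      rw [hfact]
      have hstep1 : (n:ℝ≥0∞) * (P (Q ⁻¹' {y : Vec d | (σ₀/2^(j+1)) * a n ≤ ‖y‖}) *
          P ((fun ω => (Y ω, Pmat ω)) ⁻¹' {p : Vec d × Mat d | c₁ * a n ≤ ‖p.1‖ ∧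
            T₀ * 2^j ≤ opNorm p.2})) =
          ((n:ℝ≥0∞) * P (Q ⁻¹' {y : Vec d | (σ₀/2^(j+1)) * a n ≤ ‖y‖})) *
          P ((fun ω => (Y ω, Pmat ω)) ⁻¹' {p : Vec d × Mat d | c₁ * a n ≤ ‖p.1‖ ∧
            T₀ * 2^j ≤ opNorm p.2}) := by ring
      rw [hstep1]
      have hB2 : P ((fun ω => (Y ω, Pmat ω)) ⁻¹' {p : Vec d × Mat d | c₁ * a n ≤ ‖p.1‖ ∧
          T₀ * 2^j ≤ opNorm p.2}) ≤ ENNReal.ofReal ((T₀*2^j) ^ (-β)) * I n := hPB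
      calc ((n:ℝ≥0∞) * P (Q ⁻¹' {y : Vec d | (σ₀/2^(j+1)) * a n ≤ ‖y‖})) *
          P ((fun ω => (Y ω, Pmat ω)) ⁻¹' {p : Vec d × Mat d | c₁ * a n ≤ ‖p.1‖ ∧
            T₀ * 2^j ≤ opNorm p.2})
          ≤ ENNReal.ofReal (Cu * (σ₀/2^(j+1)) ^ (-α')) *
            (ENNReal.ofReal ((T₀*2^j) ^ (-β)) * I n) := mul_le_mul' hQj hB2
        _ = (ENNReal.ofReal (Cu * (σ₀/2^(j+1)) ^ (-α')) *
            ENNReal.ofReal ((T₀*2^j) ^ (-β))) * I n := by ring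
        _ = ENNReal.ofReal (Cu * (σ₀/2^(j+1)) ^ (-α') * ((T₀*2^j) ^ (-β))) * I n := by
            rw [← ENNReal.ofReal_mul (by positivity)]
        _ = ENNReal.ofReal (K₂ * q2 ^ j) * I n := by rw [hcoef j]
    have hSbound : (n:ℝ≥0∞) * P (⋃ j, SB j) ≤ KENN * I n := by
      calc (n:ℝ≥0∞) * P (⋃ j, SB j) ≤ (n:ℝ≥0∞) * ∑' j, P (SB j) :=
            mul_le_mul_right (measure_iUnion_le _) _
        _ = ∑' j, (n:ℝ≥0∞) * P (SB j) := ENNReal.tsum_mul_left.symm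
        _ ≤ ∑' j, ENNReal.ofReal (K₂ * q2 ^ j) * I n := ENNReal.tsum_le_tsum hperj
        _ = (∑' j, ENNReal.ofReal (K₂ * q2 ^ j)) * I n := ENNReal.tsum_mul_right
        _ = KENN * I n := by rw [hgeom]
    calc (n:ℝ≥0∞) * P (E n) ≤ (n:ℝ≥0∞) * (P SA + P (⋃ j, SB j)) := by
          refine mul_le_mul_right ?_ _
          exact le_trans (measure_mono hcover) (measure_union_le _ _)
      _ = (n:ℝ≥0∞) * P SA + (n:ℝ≥0∞) * P (⋃ j, SB j) := by rw [mul_add]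
      _ ≤ _ := add_le_add hAbound hSbound
  -- conclude
  have hRHS : Tendsto (fun n : ℕ => ENNReal.ofReal CQr * ENNReal.ofReal CYr *
      ((n:ℝ≥0∞))⁻¹ + KENN * I n) atTop (𝓝 0) := by
    have h1 : Tendsto (fun n : ℕ => ENNReal.ofReal CQr * ENNReal.ofReal CYr *
        ((n:ℝ≥0∞))⁻¹) atTop (𝓝 0) := by
      have h := ENNReal.Tendsto.const_mul (a := ENNReal.ofReal CQr * ENNReal.ofReal CYr)
        ENNReal.tendsto_inv_nat_nhds_zero
        (Or.inr (ENNReal.mul_ne_top ENNReal.ofReal_ne_top ENNReal.ofReal_ne_top))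
      simpa [mul_assoc] using h
    have h2 : Tendsto (fun n => KENN * I n) atTop (𝓝 0) := by
      have h := ENNReal.Tendsto.const_mul (a := KENN) hI0 (Or.inr hKfin)
      simpa using h
    have h3 := h1.add h2
    simpa using h3
  have hENN : Tendsto (fun n : ℕ => (n:ℝ≥0∞) * P (E n)) atTop (𝓝 0) :=
    tendsto_of_tendsto_of_tendsto_of_le_of_le' tendsto_const_nhds hRHS
      (Eventually.of_forall fun n => zero_le) hmaster
  have hfinal := (ENNReal.tendsto_toReal (by simp : (0:ℝ≥0∞) ≠ ⊤)).comp hENN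
  rw [ENNReal.toReal_zero] at hfinal
  refine Tendsto.congr (fun n => ?_) hfinal
  show (((n:ℝ≥0∞)) * P (E n)).toReal = (n:ℝ) * (P (E n)).toReal
  rw [ENNReal.toReal_mul]
  simp
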